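/- arXiv:1509.06860 — 3 statements merged into one kernel-verified Lean document; each statement's English description precedes it below -/
import Mathlib

section
/- Let D be a module over a commutative ring equipped with two bilinear operations ≺ and ≻ satisfying the dendriform (pre-associative) axioms: (a ≺ b) ≺ c = a ≺ (b ≺ c + b ≻ c), (a ≻ b) ≺ c = a ≻ (b ≺ c), and a ≻ (b ≻ c) = (a ≺ b + a ≻ b) ≻ c. Define a new bilinear operation a · b := a ≻ b − b ≺ a. Then · satisfies the (left) pre-Lie identity: (a · b) · c − a · (b · c) = (b · a) · c − b · (a · c) for all a, b, c in D. -/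
/-- In any dendriform (pre-associative) algebra over a commutative ring,
the operation `a · b = a ≻ b − b ≺ a` satisfies the left pre-Lie identity. -/
theorem dendriform_preLie
    {R : Type*} [CommRing R] {D : Type*} [AddCommGroup D] [Module R D]
    (prec succ : D →ₗ[R] D →ₗ[R] D)
    (h1 : ∀ a b c : D, prec (prec a b) c = prec a (prec b c + succ b c))
    (h2 : ∀ a b c : D, prec (succ a b) c = succ a (prec b c))
    (h3 : ∀ a b c : D, succ a (succ b c) = succ (prec a b + succ a b) c)
    (dot : D → D → D)
    (hdot : ∀ a b : D, dot a b = succ a b - prec b a) :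
    ∀ a b c : D,
      dot (dot a b) c - dot a (dot b c) = dot (dot b a) c - dot b (dot a c) := by
  intro a b c
  simp only [hdot, map_sub, map_add, LinearMap.sub_apply, LinearMap.add_apply,
    map_sub, map_add]
  have e1 := h1 c b a
  have e2a := h2 a b c; have e2b := h2 b a c; have e2c := h2 a c b
  have e2d := h2 b c a; have e2e := h2 c a b; have e2f := h2 c b a
  have e3a := h3 a b c; have e3b := h3 b a c
  have e1' := h1 c a b
  simp only [map_add, LinearMap.add_apply] at *
  linear_combination (norm := abel) -e3a + e3b - e1 + e1' + e2d - e2c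
end

section
/- Let D be a module over a commutative ring equipped with two bilinear operations ≺ and ≻ satisfying the dendriform (pre-associative) axioms: (a ≺ b) ≺ c = a ≺ (b ≺ c + b ≻ c), (a ≻ b) ≺ c = a ≻ (b ≺ c), and a ≻ (b ≻ c) = (a ≺ b + a ≻ b) ≻ c; write a * b := a ≺ b + a ≻ b and [x₁, …, x_m] := x₁ ≻ (x₂ ≻ (⋯(x_{m−1} ≻ x_m)⋯)). Then for all w₁, …, w_k, u, v ∈ D (k ≥ 1): (w₁ * ⋯ * w_k) ≻ (u * v) = [w₁, …, w_k, u] * v − [w₁, …, w_k, u] ≻ v + [w₁, …, w_k, u, v]. -/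
section Aux

variable {R : Type*} [CommRing R] {D : Type*} [AddCommGroup D] [Module R D]

private lemma dend_foldr_add (succ : D →ₗ[R] D →ₗ[R] D) (y y' : D) (l : List D) :
    l.foldr (fun a b => succ a b) (y + y')
      = l.foldr (fun a b => succ a b) y + l.foldr (fun a b => succ a b) y' := by
  induction l with
  | nil => rfl
  | cons a l ih => simp [List.foldr, ih, map_add]

private lemma dend_foldr_prec (prec succ : D →ₗ[R] D →ₗ[R] D)
    (h2 : ∀ a b c : D, prec (succ a b) c = succ a (prec b c))
    (u v : D) (l : List D) :
    l.foldr (fun a b => succ a b) (prec u v)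
      = prec (l.foldr (fun a b => succ a b) u) v := by
  induction l with
  | nil => rfl
  | cons a l ih => simp [List.foldr, ih, h2]

private lemma dend_foldl_succ (prec succ : D →ₗ[R] D →ₗ[R] D)
    (h3 : ∀ a b c : D, succ a (succ b c) = succ (prec a b + succ a b) c)
    (star : D → D → D)
    (hstar : ∀ a b : D, star a b = prec a b + succ a b)
    (y : D) (ws : List D) : ∀ w : D,
    succ (ws.foldl star w) y = (w :: ws).foldr (fun a b => succ a b) y := by
  induction ws with
  | nil => intro w; rfl
  | cons a ws ih =>
    intro w
    have := ih (star w a)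
    simp only [List.foldl] at this ⊢
    rw [this]
    simp only [List.foldr, hstar, ← h3]

end Aux

/-- In any dendriform algebra, with `a * b := a ≺ b + a ≻ b` and
`[x₁,…,x_m] := x₁ ≻ (x₂ ≻ (⋯(x_{m−1} ≻ x_m)⋯))`, one has for k ≥ 1:
`(w₁ * ⋯ * w_k) ≻ (u * v)
   = [w₁,…,w_k,u] * v − [w₁,…,w_k,u] ≻ v + [w₁,…,w_k,u,v]`. -/
theorem dendriform_leftMul_star_product
    {R : Type*} [CommRing R] {D : Type*} [AddCommGroup D] [Module R D]
    (prec succ : D →ₗ[R] D →ₗ[R] D)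
    (h1 : ∀ a b c : D, prec (prec a b) c = prec a (prec b c + succ b c))
    (h2 : ∀ a b c : D, prec (succ a b) c = succ a (prec b c))
    (h3 : ∀ a b c : D, succ a (succ b c) = succ (prec a b + succ a b) c)
    (star : D → D → D)
    (hstar : ∀ a b : D, star a b = prec a b + succ a b) :
    ∀ (w : D) (ws : List D) (u v : D),
      succ (ws.foldl star w) (star u v)
        = star ((w :: ws).foldr (fun a b => succ a b) u) v
          - succ ((w :: ws).foldr (fun a b => succ a b) u) v
          + (w :: ws).foldr (fun a b => succ a b) (succ u v) := by
  intro w ws u v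
  rw [dend_foldl_succ prec succ h3 star hstar _ ws w, hstar u v,
    dend_foldr_add succ _ _ (w :: ws),
    dend_foldr_prec prec succ h2 u v (w :: ws),
    hstar]
  abel
end

section
/- Let A be a (not necessarily unital) associative ring whose product is written a · b, let D be a module over a commutative ring equipped with two bilinear operations ≺ and ≻ satisfying the dendriform (pre-associative) axioms: (x ≺ y) ≺ z = x ≺ (y ≺ z + y ≻ z), (x ≻ y) ≺ z = x ≻ (y ≺ z), x ≻ (y ≻ z) = (x ≺ y + x ≻ y) ≻ z; write x * y := x ≺ y + x ≻ y. Suppose f : A → D is an additive map satisfying f(a) * f(b) = f(a · b) for all a, b ∈ A (i.e., f is a homomorphism of A into D^(+)). For w₁, …, w_k ∈ D (k ≥ 0) let L(x) := w₁ ≻ (w₂ ≻ (⋯(w_k ≻ x)⋯)) (with L the identity when k = 0). Then for all a, b ∈ A: L(f(a)) * f(b) − L(f(a)) ≻ f(b) + L(f(a) ≻ f(b)) = L(f(a · b)). -/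
/-- Let `A` be a (not necessarily unital) associative ring and `D` a dendriform
algebra over a commutative ring, with `x * y := x ≺ y + x ≻ y`. If `f : A → D`
is additive and satisfies `f a * f b = f (a · b)`, then for every operator
`L x := w₁ ≻ (w₂ ≻ (⋯(w_k ≻ x)⋯))` (k ≥ 0) and all `a b : A`:
`L (f a) * f b − L (f a) ≻ f b + L (f a ≻ f b) = L (f (a · b))`. -/
theorem dendriform_envelope_M_relation
    {A : Type*} [NonUnitalRing A]
    {R : Type*} [CommRing R] {D : Type*} [AddCommGroup D] [Module R D]
    (prec succ : D →ₗ[R] D →ₗ[R] D)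
    (h1 : ∀ x y z : D, prec (prec x y) z = prec x (prec y z + succ y z))
    (h2 : ∀ x y z : D, prec (succ x y) z = succ x (prec y z))
    (h3 : ∀ x y z : D, succ x (succ y z) = succ (prec x y + succ x y) z)
    (star : D → D → D)
    (hstar : ∀ x y : D, star x y = prec x y + succ x y)
    (f : A → D)
    (hadd : ∀ a b : A, f (a + b) = f a + f b)
    (hmul : ∀ a b : A, star (f a) (f b) = f (a * b))
    (ws : List D)
    (L : D → D)
    (hL : ∀ x : D, L x = ws.foldr (fun a b => succ a b) x) :
    ∀ a b : A,
      star (L (f a)) (f b) - succ (L (f a)) (f b) + L (succ (f a) (f b))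
        = L (f (a * b)) := by
  have key : ∀ (l : List D) (x y : D),
      prec (l.foldr (fun a b => succ a b) x) y
        + l.foldr (fun a b => succ a b) (succ x y)
        = l.foldr (fun a b => succ a b) (prec x y + succ x y) := by
    intro l
    induction l with
    | nil => intro x y; simp
    | cons w l ih =>
        intro x y
        simp only [List.foldr_cons]
        rw [h2, ← map_add, ih]
  intro a b
  rw [hstar, ← hmul, hstar, hL, hL, hL]
  rw [add_sub_cancel_right]
  exact key ws (f a) (f b)
end
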